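/- The measure ν_α on the Rado graph vertices commutes with itself (Fubini for ν_α): for every finitely-supported function f : V × V → [0,1], the iterated integrals agree: ∫∫ f(x,y) ν_α(dy) ν_α(dx) = ∫∫ f(x,y) ν_α(dx) ν_α(dy). In particular, for the indicator of the edge relation, both iterated integrals equal α. -/
import Mathlib


/-- A graph has the extension property if for all disjoint finite vertex sets `A`, `B`
there is a vertex outside `A ∪ B` adjacent to everything in `A` and nothing in `B`. -/
def HasExtensionProperty {V : Type*} (G : SimpleGraph V) : Prop :=
  ∀ A B : Finset V, Disjoint A B →
    ∃ v, v ∉ A ∧ v ∉ B ∧ (∀ a ∈ A, G.Adj v a) ∧ ∀ b ∈ B, ¬ G.Adj v b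

/-- The finite list of vertices `a 0, …, a (n-1)` supports the set `S`:
every automorphism of `G` fixing each `a i` maps `S` to itself. -/
def SupportsSet {V : Type} (G : SimpleGraph V) {n : ℕ} (a : Fin n → V) (S : Set V) : Prop :=
  ∀ σ : G ≃g G, (∀ i, σ (a i) = a i) → σ '' S = S

/-- The family `v` realizes all `2^n` adjacency patterns to `a 0, …, a (n-1)`:
`v c` lies outside the support and is adjacent to `a i` exactly when `c i = true`. -/
def RealizesPatterns {V : Type} (G : SimpleGraph V) {n : ℕ}
    (a : Fin n → V) (v : (Fin n → Bool) → V) : Prop :=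
  ∀ c : Fin n → Bool, v c ∉ Set.range a ∧ ∀ i, (G.Adj (v c) (a i) ↔ c i = true)

open scoped Classical in
/-- `ν_α(S) = Σ_j [v_j ∈ S] ∏_i (α[E(v_j,a_i)] + (1-α)[¬E(v_j,a_i)])`, the candidate
value of the measure of `S`, computed from pattern representatives `v`. -/
noncomputable def patVal {V : Type} (α : ℝ) {n : ℕ} (S : Set V)
    (v : (Fin n → Bool) → V) : ℝ :=
  ∑ c : Fin n → Bool,
    (if v c ∈ S then (1:ℝ) else 0) * ∏ i, (if c i then α else 1 - α)

/-- A set is finitely supported if some finite list of vertices supports it. -/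
def FinitelySupportedSet {V : Type} (G : SimpleGraph V) (S : Set V) : Prop :=
  ∃ (n : ℕ) (a : Fin n → V), Function.Injective a ∧ SupportsSet G a S

/-- A function on vertices is finitely supported (in the nominal sense):
it is invariant under all automorphisms fixing some finite list of vertices. -/
def FinSuppFun {V : Type} (G : SimpleGraph V) (f : V → ℝ) : Prop :=
  ∃ (n : ℕ) (a : Fin n → V), ∀ σ : G ≃g G, (∀ i, σ (a i) = a i) → ∀ x, f (σ x) = f x

/-- A binary function on vertices is finitely supported (in the nominal sense). -/
def FinSuppFun₂ {V : Type} (G : SimpleGraph V) (f : V → V → ℝ) : Prop :=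
  ∃ (n : ℕ) (a : Fin n → V), ∀ σ : G ≃g G, (∀ i, σ (a i) = a i) →
    ∀ x y, f (σ x) (σ y) = f x y

open scoped Classical in
/-- The integral of a `[0,1]`-valued function against a finitely-additive measure `ν`
on finitely-supported sets, defined as the supremum of the `ν`-sums of simple
functions (with nonnegative weights and finitely-supported level sets) dominated
by `f`. -/
noncomputable def nomIntegral {V : Type} (G : SimpleGraph V)
    (ν : Set V → ℝ) (f : V → ℝ) : ℝ :=
  sSup {r : ℝ | ∃ (m : ℕ) (t : Fin m → ℝ) (U : Fin m → Set V),
    (∀ i, 0 ≤ t i) ∧ (∀ i, FinitelySupportedSet G (U i)) ∧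
    (∀ x, (∑ i, t i * (if x ∈ U i then (1:ℝ) else 0)) ≤ f x) ∧
    r = ∑ i, t i * ν (U i)}


section BackForth

open scoped Classical
variable {V : Type} (G : SimpleGraph V)

/-- A finite partial isomorphism of `G`, as a finite set of pairs. -/
structure PartIso where
  s : Finset (V × V)
  compat : ∀ p ∈ s, ∀ q ∈ s, (p.1 = q.1 ↔ p.2 = q.2) ∧ (G.Adj p.1 q.1 ↔ G.Adj p.2 q.2)

variable {G}

lemma PartIso.extend_dom (hG : HasExtensionProperty G) (φ : PartIso G) (x : V) :
    ∃ ψ : PartIso G, φ.s ⊆ ψ.s ∧ ∃ y, (x, y) ∈ ψ.s := by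
  classical
  by_cases h : ∃ y, (x, y) ∈ φ.s
  · exact ⟨φ, Finset.Subset.refl _, h⟩
  push_neg at h
  have hx1 : ∀ q ∈ φ.s, x ≠ q.1 := by
    rintro q hq rfl
    exact h q.2 hq
  set A := (φ.s.filter (fun p => G.Adj x p.1)).image Prod.snd with hA
  set B := (φ.s.filter (fun p => ¬ G.Adj x p.1)).image Prod.snd with hB
  have hdisj : Disjoint A B := by
    rw [Finset.disjoint_left]
    rintro y hyA hyB
    simp only [hA, hB, Finset.mem_image, Finset.mem_filter] at hyA hyB
    obtain ⟨p, ⟨hp, hpadj⟩, hp2⟩ := hyA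
    obtain ⟨q, ⟨hq, hqadj⟩, hq2⟩ := hyB
    have : p.1 = q.1 := ((φ.compat p hp q hq).1).2 (hp2.trans hq2.symm)
    exact hqadj (this ▸ hpadj)
  obtain ⟨v, hvA, hvB, hadjA, hadjB⟩ := hG A B hdisj
  have hv2 : ∀ q ∈ φ.s, v ≠ q.2 := by
    rintro q hq rfl
    by_cases hadj : G.Adj x q.1
    · exact hvA (Finset.mem_image_of_mem _ (Finset.mem_filter.2 ⟨hq, hadj⟩))
    · exact hvB (Finset.mem_image_of_mem _ (Finset.mem_filter.2 ⟨hq, hadj⟩))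
  have key : ∀ q ∈ φ.s, (G.Adj x q.1 ↔ G.Adj v q.2) := by
    intro q hq
    constructor
    · intro hadj
      exact hadjA _ (Finset.mem_image_of_mem _ (Finset.mem_filter.2 ⟨hq, hadj⟩))
    · intro hadj
      by_contra hn
      exact hadjB _ (Finset.mem_image_of_mem _ (Finset.mem_filter.2 ⟨hq, hn⟩)) hadj
  refine ⟨⟨insert (x, v) φ.s, ?_⟩, Finset.subset_insert _ _, v, Finset.mem_insert_self _ _⟩
  intro p hp q hq
  rcases Finset.mem_insert.1 hp with rfl | hp <;>
    rcases Finset.mem_insert.1 hq with rfl | hq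
  · exact ⟨by simp, by simp [G.irrefl]⟩
  · exact ⟨iff_of_false (hx1 q hq) (hv2 q hq), key q hq⟩
  · exact ⟨iff_of_false (Ne.symm (hx1 p hp)) (Ne.symm (hv2 p hp)),
      by rw [G.adj_comm, G.adj_comm p.2]; exact key p hp⟩
  · exact φ.compat p hp q hq

/-- Swap a partial isomorphism. -/
noncomputable def PartIso.swap (φ : PartIso G) : PartIso G where
  s := φ.s.image Prod.swap
  compat := by
    intro p hp q hq
    simp only [Finset.mem_image] at hp hq
    obtain ⟨p', hp', rfl⟩ := hp
    obtain ⟨q', hq', rfl⟩ := hq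
    obtain ⟨h1, h2⟩ := φ.compat p' hp' q' hq'
    exact ⟨h1.symm, h2.symm⟩

lemma PartIso.mem_swap (φ : PartIso G) {x y : V} : (x, y) ∈ φ.swap.s ↔ (y, x) ∈ φ.s := by
  simp only [PartIso.swap, Finset.mem_image]
  constructor
  · rintro ⟨⟨p1, p2⟩, hp, hpe⟩
    have h1 : p2 = x := congrArg Prod.fst hpe
    have h2 : p1 = y := congrArg Prod.snd hpe
    rwa [h1, h2] at hp
  · intro h
    exact ⟨(y, x), h, rfl⟩

lemma PartIso.extend_cod (hG : HasExtensionProperty G) (φ : PartIso G) (y : V) :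
    ∃ ψ : PartIso G, φ.s ⊆ ψ.s ∧ ∃ x, (x, y) ∈ ψ.s := by
  obtain ⟨ψ', hsub, x, hx⟩ := φ.swap.extend_dom hG y
  refine ⟨ψ'.swap, ?_, x, ψ'.mem_swap.2 hx⟩
  intro p hp
  have : p.swap ∈ φ.swap.s := by
    rcases p with ⟨p1, p2⟩
    exact (PartIso.mem_swap φ).2 hp
  rcases p with ⟨p1, p2⟩
  exact (PartIso.mem_swap ψ').2 (hsub this)

variable (hG : HasExtensionProperty G)

/-- One step: add `x` to the domain and to the codomain. -/
noncomputable def PartIso.step (φ : PartIso G) (x : V) : PartIso G :=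
  ((φ.extend_dom hG x).choose.extend_cod hG x).choose

lemma PartIso.step_spec (φ : PartIso G) (x : V) :
    φ.s ⊆ (φ.step hG x).s ∧ (∃ y, (x, y) ∈ (φ.step hG x).s) ∧
      ∃ z, (z, x) ∈ (φ.step hG x).s := by
  obtain ⟨h1, y, hy⟩ := (φ.extend_dom hG x).choose_spec
  obtain ⟨h2, z, hz⟩ := ((φ.extend_dom hG x).choose.extend_cod hG x).choose_spec
  exact ⟨h1.trans h2, ⟨y, h2 hy⟩, z, hz⟩

noncomputable def PartIso.chain (φ₀ : PartIso G) (e : ℕ → V) : ℕ → PartIso G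
  | 0 => φ₀
  | n + 1 => (PartIso.chain φ₀ e n).step hG (e n)

lemma PartIso.chain_mono (φ₀ : PartIso G) (e : ℕ → V) {m n : ℕ} (h : m ≤ n) :
    (PartIso.chain hG φ₀ e m).s ⊆ (PartIso.chain hG φ₀ e n).s := by
  induction n with
  | zero => rw [Nat.le_zero.1 h]
  | succ n ih =>
      rcases Nat.lt_succ_iff_lt_or_eq.1 (Nat.lt_succ_of_le h) with h' | rfl
      · exact (ih (Nat.lt_succ_iff.1 h')).trans
          ((PartIso.chain hG φ₀ e n).step_spec hG (e n)).1
      · exact Finset.Subset.refl _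

/-- Back-and-forth: a finite partial isomorphism extends to an automorphism. -/
theorem exists_auto [Countable V] [Nonempty V] (hG : HasExtensionProperty G)
    {m : ℕ} (a b : Fin m → V) (ha : Function.Injective a) (hb : Function.Injective b)
    (hadj : ∀ i j, G.Adj (a i) (a j) ↔ G.Adj (b i) (b j)) :
    ∃ σ : G ≃g G, ∀ i, σ (a i) = b i := by
  classical
  obtain ⟨e, he⟩ := exists_surjective_nat V
  let φ₀ : PartIso G := by
    refine ⟨(Finset.univ : Finset (Fin m)).image (fun i => (a i, b i)), ?_⟩
    intro p hp q hq
    simp only [Finset.mem_image, Finset.mem_univ, true_and] at hp hq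
    obtain ⟨i, rfl⟩ := hp
    obtain ⟨j, rfl⟩ := hq
    exact ⟨by simp [ha.eq_iff, hb.eq_iff], hadj i j⟩
  set C := PartIso.chain hG φ₀ e with hC
  set T : Set (V × V) := {p | ∃ n, p ∈ (C n).s} with hT
  have compatT : ∀ p ∈ T, ∀ q ∈ T,
      (p.1 = q.1 ↔ p.2 = q.2) ∧ (G.Adj p.1 q.1 ↔ G.Adj p.2 q.2) := by
    rintro p ⟨np, hp⟩ q ⟨nq, hq⟩
    exact (C (max np nq)).compat p
      (PartIso.chain_mono hG φ₀ e (le_max_left _ _) hp) q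
      (PartIso.chain_mono hG φ₀ e (le_max_right _ _) hq)
  have domT : ∀ x : V, ∃ y, (x, y) ∈ T := by
    intro x
    obtain ⟨n, rfl⟩ := he x
    obtain ⟨y, hy⟩ := ((C n).step_spec hG (e n)).2.1
    exact ⟨y, n + 1, hy⟩
  have codT : ∀ y : V, ∃ x, (x, y) ∈ T := by
    intro y
    obtain ⟨n, rfl⟩ := he y
    obtain ⟨x, hx⟩ := ((C n).step_spec hG (e n)).2.2
    exact ⟨x, n + 1, hx⟩
  have funcl : ∀ {x y y' : V}, (x, y) ∈ T → (x, y') ∈ T → y = y' := by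
    intro x y y' h1 h2
    exact ((compatT _ h1 _ h2).1).1 rfl
  have funcr : ∀ {x x' y : V}, (x, y) ∈ T → (x', y) ∈ T → x = x' := by
    intro x x' y h1 h2
    exact ((compatT _ h1 _ h2).1).2 rfl
  let F : V → V := fun x => (domT x).choose
  have hF : ∀ x, (x, F x) ∈ T := fun x => (domT x).choose_spec
  let Fi : V → V := fun y => (codT y).choose
  have hFi : ∀ y, (Fi y, y) ∈ T := fun y => (codT y).choose_spec
  have li : Function.LeftInverse Fi F := fun x => funcr (hFi (F x)) (hF x)
  have ri : Function.RightInverse Fi F := fun y => funcl (hF (Fi y)) (hFi y)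
  refine ⟨⟨⟨F, Fi, li, ri⟩, ?_⟩, ?_⟩
  · intro x y
    exact ((compatT _ (hF x) _ (hF y)).2).symm
  · intro i
    have hm : (a i, b i) ∈ T := ⟨0, Finset.mem_image_of_mem _ (Finset.mem_univ i)⟩
    exact funcl (hF (a i)) hm

end BackForth

section Measure
variable {V : Type} {G : SimpleGraph V}

/-- weight of a pattern -/
noncomputable def wgt (α : ℝ) {n : ℕ} (c : Fin n → Bool) : ℝ :=
  ∏ i, (if c i then α else 1 - α)

lemma wgt_nonneg {α : ℝ} (hα : α ∈ Set.Icc (0:ℝ) 1) {n : ℕ} (c : Fin n → Bool) :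
    0 ≤ wgt α c := by
  refine Finset.prod_nonneg fun i _ => ?_
  rcases hα with ⟨h0, h1⟩
  split <;> linarith

lemma sum_prod_bool {ι : Type*} [Fintype ι] [DecidableEq ι] (β : Bool → ℝ) :
    ∑ c : ι → Bool, ∏ i, β (c i) = (β true + β false) ^ (Fintype.card ι) := by
  classical
  have := Finset.prod_univ_sum (fun _ : ι => (Finset.univ : Finset Bool)) (fun _ b => β b)
  rw [Fintype.piFinset_univ] at this
  rw [← this]
  simp [Fintype.sum_bool, Finset.prod_const, add_comm]

lemma wgt_sum (α : ℝ) (n : ℕ) : ∑ c : Fin n → Bool, wgt α c = 1 := by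
  have h := sum_prod_bool (ι := Fin n) (fun b => if b then α else 1 - α)
  simp only [wgt]
  rw [h]
  norm_num

lemma sum_restrict_core {A B : Type} [Fintype A] [Fintype B] [DecidableEq A] [DecidableEq B]
    (β : Bool → ℝ) (hβ : β true + β false = 1) (F : (A → Bool) → ℝ) :
    ∑ c : A ⊕ B → Bool, F (fun i => c (Sum.inl i)) * ∏ k, β (c k)
      = ∑ c : A → Bool, F c * ∏ i, β (c i) := by
  classical
  rw [← Equiv.sum_comp (Equiv.sumArrowEquivProdArrow A B Bool).symm
    (fun c : A ⊕ B → Bool => F (fun i => c (Sum.inl i)) * ∏ k, β (c k)),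
    Fintype.sum_prod_type]
  have key : ∀ (u : A → Bool) (w : B → Bool),
      F (fun i => (Equiv.sumArrowEquivProdArrow A B Bool).symm (u, w) (Sum.inl i))
        * ∏ k, β ((Equiv.sumArrowEquivProdArrow A B Bool).symm (u, w) k)
      = (F u * ∏ i, β (u i)) * ∏ j, β (w j) := by
    intro u w
    rw [Fintype.prod_sum_type]
    simp only [Equiv.sumArrowEquivProdArrow, Equiv.coe_fn_symm_mk, Sum.elim_inl, Sum.elim_inr]
    ring
  calc ∑ u : A → Bool, ∑ w : B → Bool,
        F (fun i => (Equiv.sumArrowEquivProdArrow A B Bool).symm (u, w) (Sum.inl i))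
          * ∏ k, β ((Equiv.sumArrowEquivProdArrow A B Bool).symm (u, w) k)
      = ∑ u : A → Bool, ∑ w : B → Bool, (F u * ∏ i, β (u i)) * ∏ j, β (w j) := by
        exact Finset.sum_congr rfl fun u _ => Finset.sum_congr rfl fun w _ => key u w
    _ = ∑ u : A → Bool, (F u * ∏ i, β (u i)) * ∑ w : B → Bool, ∏ j, β (w j) := by
        exact Finset.sum_congr rfl fun u _ => (Finset.mul_sum _ _ _).symm
    _ = ∑ c : A → Bool, F c * ∏ i, β (c i) := by
        rw [← Finset.sum_mul, sum_prod_bool, hβ, one_pow, mul_one]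

/-- marginalization along an injective reindexing -/
lemma sum_restrict {n N : ℕ} (β : Bool → ℝ) (hβ : β true + β false = 1)
    (ι : Fin n → Fin N) (hι : Function.Injective ι)
    (F : (Fin n → Bool) → ℝ) :
    ∑ c' : Fin N → Bool, F (fun i => c' (ι i)) * ∏ k, β (c' k)
      = ∑ c : Fin n → Bool, F c * ∏ i, β (c i) := by
  classical
  set B := {k : Fin N // k ∉ Set.range ι} with hB
  set e : Fin n ⊕ B ≃ Fin N :=
    (Equiv.sumCongr (Equiv.ofInjective ι hι) (Equiv.refl B)).trans
      (Equiv.sumCompl (fun k => k ∈ Set.range ι)) with he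
  have he1 : ∀ i : Fin n, e (Sum.inl i) = ι i := by
    intro i
    rfl
  calc ∑ c' : Fin N → Bool, F (fun i => c' (ι i)) * ∏ k, β (c' k)
      = ∑ d : Fin n ⊕ B → Bool, F (fun i => d (Sum.inl i)) * ∏ k, β (d k) := by
        rw [← Equiv.sum_comp (Equiv.arrowCongr e (Equiv.refl Bool))
          (fun c' : Fin N → Bool => F (fun i => c' (ι i)) * ∏ k, β (c' k))]
        refine Finset.sum_congr rfl fun d _ => ?_
        have hap : ∀ j, (Equiv.arrowCongr e (Equiv.refl Bool)) d (e j) = d j := by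
          intro j
          simp [Equiv.arrowCongr_apply]
        congr 1
        · congr 1
          funext i
          rw [← he1 i, hap (Sum.inl i)]
        · rw [← Equiv.prod_comp e (fun k => β ((Equiv.arrowCongr e (Equiv.refl Bool)) d k))]
          exact Finset.prod_congr rfl fun j _ => congrArg β (hap j)
    _ = ∑ c : Fin n → Bool, F c * ∏ i, β (c i) := sum_restrict_core β hβ F

/-- The pattern class of `c` over the tuple `a`. -/
def patClass (G : SimpleGraph V) {n : ℕ} (a : Fin n → V) (c : Fin n → Bool) : Set V :=
  {x | x ∉ Set.range a ∧ ∀ i, G.Adj x (a i) ↔ c i = true}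

lemma exists_realizes (hG : HasExtensionProperty G) {n : ℕ} (a : Fin n → V)
    (ha : Function.Injective a) : ∃ v, RealizesPatterns G a v := by
  classical
  have key : ∀ c : Fin n → Bool, ∃ x, x ∉ Set.range a ∧ ∀ i, (G.Adj x (a i) ↔ c i = true) := by
    intro c
    have hdisj : Disjoint ((Finset.univ.filter (fun i => c i = true)).image a)
        ((Finset.univ.filter (fun i => ¬ c i = true)).image a) := by
      rw [Finset.disjoint_left]
      rintro x hx1 hx2
      simp only [Finset.mem_image, Finset.mem_filter, Finset.mem_univ, true_and] at hx1 hx2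
      obtain ⟨i, hi, rfl⟩ := hx1
      obtain ⟨j, hj, hji⟩ := hx2
      exact hj (ha hji ▸ hi)
    obtain ⟨x, hxA, hxB, hA, hB⟩ := hG _ _ hdisj
    refine ⟨x, ?_, ?_⟩
    · rintro ⟨i, rfl⟩
      by_cases hc : c i = true
      · exact hxA (Finset.mem_image_of_mem a (Finset.mem_filter.2 ⟨Finset.mem_univ i, hc⟩))
      · exact hxB (Finset.mem_image_of_mem a (Finset.mem_filter.2 ⟨Finset.mem_univ i, hc⟩))
    · intro i
      by_cases hc : c i = true
      · exact iff_of_true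
          (hA _ (Finset.mem_image_of_mem a (Finset.mem_filter.2 ⟨Finset.mem_univ i, hc⟩))) hc
      · exact iff_of_false
          (hB _ (Finset.mem_image_of_mem a (Finset.mem_filter.2 ⟨Finset.mem_univ i, hc⟩))) hc
  exact ⟨fun c => (key c).choose, fun c => (key c).choose_spec⟩

lemma mem_patClass_iff {n : ℕ} {a : Fin n → V} (σ : G ≃g G) (hσ : ∀ i, σ (a i) = a i)
    {c : Fin n → Bool} (x : V) : σ x ∈ patClass G a c ↔ x ∈ patClass G a c := by
  have h1 : σ x ∈ Set.range a ↔ x ∈ Set.range a := by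
    constructor
    · rintro ⟨i, hi⟩
      exact ⟨i, σ.injective (by rw [hσ i, hi])⟩
    · rintro ⟨i, rfl⟩
      exact ⟨i, (hσ i).symm⟩
  have h2 : ∀ i, G.Adj (σ x) (a i) ↔ G.Adj x (a i) := by
    intro i
    conv_lhs => rw [← hσ i]
    exact σ.map_adj_iff
  constructor
  · rintro ⟨hr, hadj⟩
    exact ⟨fun h => hr (h1.2 h), fun i => (h2 i).symm.trans (hadj i)⟩
  · rintro ⟨hr, hadj⟩
    exact ⟨fun h => hr (h1.1 h), fun i => (h2 i).trans (hadj i)⟩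

lemma supports_patClass {n : ℕ} (a : Fin n → V) (c : Fin n → Bool) :
    SupportsSet G a (patClass G a c) := by
  intro σ hσ
  ext y
  constructor
  · rintro ⟨x, hx, rfl⟩
    exact (mem_patClass_iff σ hσ x).2 hx
  · intro hy
    refine ⟨σ.symm y, ?_, σ.apply_symm_apply y⟩
    have : σ (σ.symm y) ∈ patClass G a c := by rwa [σ.apply_symm_apply]
    exact (mem_patClass_iff σ hσ (σ.symm y)).1 this

lemma realizer_mem_patClass {n : ℕ} {a : Fin n → V} {v : (Fin n → Bool) → V}
    (hv : RealizesPatterns G a v) (c : Fin n → Bool) : v c ∈ patClass G a c :=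
  ⟨(hv c).1, (hv c).2⟩

lemma mem_patClass_unique {n : ℕ} {a : Fin n → V} {c c' : Fin n → Bool} {x : V}
    (h : x ∈ patClass G a c) (h' : x ∈ patClass G a c') : c = c' := by
  funext i
  have := (h.2 i).symm.trans (h'.2 i)
  by_cases hc : c i = true
  · rw [hc, (this.1 hc)]
  · cases hci : c i
    · cases hci' : c' i
      · rfl
      · exact absurd (this.2 hci') (by rw [hci] at hc ⊢; exact hc ∘ fun h => h)
    · exact absurd hci hc

lemma nu_patClass {α : ℝ} {ν : Set V → ℝ}
    (hν : ∀ (S : Set V) {n : ℕ} (a : Fin n → V) (v : (Fin n → Bool) → V),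
      Function.Injective a → SupportsSet G a S → RealizesPatterns G a v →
        ν S = patVal α S v)
    {n : ℕ} {a : Fin n → V} (ha : Function.Injective a)
    {v : (Fin n → Bool) → V} (hv : RealizesPatterns G a v) (c : Fin n → Bool) :
    ν (patClass G a c) = wgt α c := by
  classical
  rw [hν (patClass G a c) a v ha (supports_patClass a c) hv]
  unfold patVal
  rw [Finset.sum_eq_single c]
  · rw [if_pos (realizer_mem_patClass hv c), one_mul]
    rfl
  · intro c' _ hne
    rw [if_neg, zero_mul]
    intro hmem
    exact hne (mem_patClass_unique (realizer_mem_patClass hv c') hmem)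
  · intro h
    exact absurd (Finset.mem_univ c) h


lemma snoc_inj {n : ℕ} {a : Fin n → V} (ha : Function.Injective a) {x : V}
    (hx : x ∉ Set.range a) : Function.Injective (Fin.snoc a x : Fin (n+1) → V) := by
  intro i j h
  induction i using Fin.lastCases with
  | last =>
    induction j using Fin.lastCases with
    | last => rfl
    | cast j =>
      rw [Fin.snoc_last, Fin.snoc_castSucc] at h
      exact absurd ⟨j, h.symm⟩ hx
  | cast i =>
    induction j using Fin.lastCases with
    | last =>
      rw [Fin.snoc_last, Fin.snoc_castSucc] at h
      exact absurd ⟨i, h⟩ hx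
    | cast j =>
      rw [Fin.snoc_castSucc, Fin.snoc_castSucc] at h
      exact congrArg Fin.castSucc (ha h)

lemma const_on_patClass [Countable V] [Infinite V] (hG : HasExtensionProperty G)
    {n : ℕ} {a : Fin n → V} (ha : Function.Injective a)
    {g : V → ℝ} (hg : ∀ σ : G ≃g G, (∀ i, σ (a i) = a i) → ∀ z, g (σ z) = g z)
    {c : Fin n → Bool} {x y : V} (hx : x ∈ patClass G a c) (hy : y ∈ patClass G a c) :
    g x = g y := by
  have hadj : ∀ i j : Fin (n + 1),
      G.Adj ((Fin.snoc a x : Fin (n+1) → V) i) ((Fin.snoc a x : Fin (n+1) → V) j)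
      ↔ G.Adj ((Fin.snoc a y : Fin (n+1) → V) i) ((Fin.snoc a y : Fin (n+1) → V) j) := by
    intro i j
    induction i using Fin.lastCases with
    | last =>
      induction j using Fin.lastCases with
      | last =>
        simp only [Fin.snoc_last]
        exact iff_of_false (G.irrefl) (G.irrefl)
      | cast j =>
        simp only [Fin.snoc_last, Fin.snoc_castSucc]
        exact (hx.2 j).trans (hy.2 j).symm
    | cast i =>
      induction j using Fin.lastCases with
      | last =>
        simp only [Fin.snoc_last, Fin.snoc_castSucc]
        rw [G.adj_comm (a i) x, G.adj_comm (a i) y]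
        exact (hx.2 i).trans (hy.2 i).symm
      | cast j =>
        simp only [Fin.snoc_castSucc]
  obtain ⟨σ, hσ⟩ := exists_auto hG (Fin.snoc a x) (Fin.snoc a y)
    (snoc_inj ha hx.1) (snoc_inj ha hy.1) hadj
  have hfix : ∀ i, σ (a i) = a i := by
    intro i
    have := hσ i.castSucc
    rwa [Fin.snoc_castSucc, Fin.snoc_castSucc] at this
  have hσx : σ x = y := by
    have := hσ (Fin.last n)
    rwa [Fin.snoc_last, Fin.snoc_last] at this
  rw [← hσx]
  exact (hg σ hfix x).symm

section KeyBound
open scoped Classical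

lemma key_bound [Countable V] [Infinite V] (hG : HasExtensionProperty G)
    {α : ℝ} (hα : α ∈ Set.Icc (0:ℝ) 1) {ν : Set V → ℝ}
    (hν : ∀ (S : Set V) {nn : ℕ} (aa : Fin nn → V) (vv : (Fin nn → Bool) → V),
      Function.Injective aa → SupportsSet G aa S → RealizesPatterns G aa vv →
        ν S = patVal α S vv)
    {n : ℕ} (a : Fin n → V) (ha : Function.Injective a)
    (g : V → ℝ) {m : ℕ} (t : Fin m → ℝ) (U : Fin m → Set V)
    (ht : ∀ i, 0 ≤ t i) (hU : ∀ i, FinitelySupportedSet G (U i))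
    (hdom : ∀ x, (∑ i, t i * (if x ∈ U i then (1:ℝ) else 0)) ≤ g x) :
    ∃ (N : ℕ) (a' : Fin N → V) (ι : Fin n → Fin N) (v' : (Fin N → Bool) → V),
      Function.Injective a' ∧ (∀ i, a' (ι i) = a i) ∧ Function.Injective ι ∧
      RealizesPatterns G a' v' ∧
      (∑ i, t i * ν (U i)) ≤ ∑ c' : Fin N → Bool, g (v' c') * wgt α c' := by
  choose nn b hbinj hbsupp using hU
  set A : Finset V := (Finset.univ.image a) ∪
      (Finset.univ.biUnion (fun i : Fin m => Finset.univ.image (b i))) with hA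
  set N := A.card with hN
  set a' : Fin N → V := fun k => ((A.equivFin.symm k : A) : V) with ha'
  have ha'inj : Function.Injective a' := fun k l h => by
    have := A.equivFin.symm.injective (Subtype.ext h)
    exact this
  have hmem : ∀ x ∈ A, ∃ k, a' k = x := fun x hx => ⟨A.equivFin ⟨x, hx⟩, by simp [ha']⟩
  have hamem : ∀ i, a i ∈ A :=
    fun i => Finset.mem_union_left _ (Finset.mem_image_of_mem a (Finset.mem_univ i))
  set ι : Fin n → Fin N := fun i => A.equivFin ⟨a i, hamem i⟩ with hι
  have hιa : ∀ i, a' (ι i) = a i := fun i => by simp [ha', hι]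
  have hιinj : Function.Injective ι := fun i j h => ha (by rw [← hιa i, ← hιa j, h])
  have hfix : ∀ (σ : G ≃g G), (∀ k, σ (a' k) = a' k) → ∀ x ∈ A, σ x = x := by
    intro σ hσ x hx
    obtain ⟨k, rfl⟩ := hmem x hx
    exact hσ k
  have hsupp' : ∀ i, SupportsSet G a' (U i) := by
    intro i σ hσ
    refine hbsupp i σ fun j => hfix σ hσ _ ?_
    exact Finset.mem_union_right _ (Finset.mem_biUnion.2
      ⟨i, Finset.mem_univ i, Finset.mem_image_of_mem _ (Finset.mem_univ j)⟩)
  obtain ⟨v', hv'⟩ := exists_realizes hG a' ha'inj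
  refine ⟨N, a', ι, v', ha'inj, hιa, hιinj, hv', ?_⟩
  have hνU : ∀ i, ν (U i)
      = ∑ c' : Fin N → Bool, (if v' c' ∈ U i then (1:ℝ) else 0) * wgt α c' := by
    intro i
    rw [hν (U i) a' v' ha'inj (hsupp' i) hv']
    rfl
  calc ∑ i, t i * ν (U i)
      = ∑ c' : Fin N → Bool, (∑ i, t i * (if v' c' ∈ U i then (1:ℝ) else 0)) * wgt α c' := by
        simp_rw [hνU, Finset.mul_sum]
        rw [Finset.sum_comm]
        refine Finset.sum_congr rfl fun c' _ => ?_
        rw [Finset.sum_mul]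
        exact Finset.sum_congr rfl fun i _ => (mul_assoc _ _ _).symm
    _ ≤ ∑ c' : Fin N → Bool, g (v' c') * wgt α c' :=
        Finset.sum_le_sum fun c' _ =>
          mul_le_mul_of_nonneg_right (hdom (v' c')) (wgt_nonneg hα c')

lemma nomIntegral_eq [Countable V] [Infinite V] (hG : HasExtensionProperty G)
    {α : ℝ} (hα : α ∈ Set.Icc (0:ℝ) 1) {ν : Set V → ℝ}
    (hν : ∀ (S : Set V) {nn : ℕ} (aa : Fin nn → V) (vv : (Fin nn → Bool) → V),
      Function.Injective aa → SupportsSet G aa S → RealizesPatterns G aa vv →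
        ν S = patVal α S vv)
    {n : ℕ} {a : Fin n → V} (ha : Function.Injective a)
    {v : (Fin n → Bool) → V} (hv : RealizesPatterns G a v)
    {g : V → ℝ} (hg0 : ∀ x, 0 ≤ g x) (hg1 : ∀ x, g x ≤ 1)
    (hinv : ∀ σ : G ≃g G, (∀ i, σ (a i) = a i) → ∀ z, g (σ z) = g z) :
    nomIntegral G ν g = ∑ c : Fin n → Bool, g (v c) * wgt α c := by
  set B := ∑ c : Fin n → Bool, g (v c) * wgt α c with hBdef
  set SS := {r : ℝ | ∃ (m : ℕ) (t : Fin m → ℝ) (U : Fin m → Set V),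
    (∀ i, 0 ≤ t i) ∧ (∀ i, FinitelySupportedSet G (U i)) ∧
    (∀ x, (∑ i, t i * (if x ∈ U i then (1:ℝ) else 0)) ≤ g x) ∧
    r = ∑ i, t i * ν (U i)} with hSS
  have hub : ∀ r ∈ SS, r ≤ B := by
    rintro r ⟨m, t, U, ht, hU, hdom, rfl⟩
    obtain ⟨N, a', ι, v', ha', hιa, hι, hv', hle⟩ :=
      key_bound hG hα hν a ha g t U ht hU hdom
    refine hle.trans (le_of_eq ?_)
    have hvc : ∀ c' : Fin N → Bool, g (v' c') = g (v (fun i => c' (ι i))) := by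
      intro c'
      refine const_on_patClass hG ha hinv ?_ (realizer_mem_patClass hv _)
      refine ⟨?_, ?_⟩
      · rintro ⟨i, hi⟩
        exact (hv' c').1 ⟨ι i, by rw [hιa i, hi]⟩
      · intro i
        rw [← hιa i]
        exact (hv' c').2 (ι i)
    calc ∑ c' : Fin N → Bool, g (v' c') * wgt α c'
        = ∑ c' : Fin N → Bool,
            g (v (fun i => c' (ι i))) * ∏ k, (if c' k then α else 1 - α) :=
          Finset.sum_congr rfl fun c' _ => by rw [hvc c']; rfl
      _ = ∑ c : Fin n → Bool, g (v c) * ∏ i, (if c i then α else 1 - α) :=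
          sum_restrict (fun b => if b then α else 1 - α) (by norm_num) ι hι
            (fun c => g (v c))
      _ = B := rfl
  have hmemB : B ∈ SS := by
    set e : Fin (Fintype.card (Fin n → Bool)) ≃ (Fin n → Bool) :=
      (Fintype.equivFin (Fin n → Bool)).symm with he
    refine ⟨Fintype.card (Fin n → Bool), fun j => g (v (e j)),
      fun j => patClass G a (e j), fun j => hg0 _,
      fun j => ⟨n, a, ha, supports_patClass a _⟩, ?_, ?_⟩
    · intro x
      by_cases hx : ∃ c, x ∈ patClass G a c
      · obtain ⟨c, hc⟩ := hx
        have hsum : ∑ j, g (v (e j)) * (if x ∈ patClass G a (e j) then (1:ℝ) else 0)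
            = g (v c) := by
          rw [Finset.sum_eq_single (e.symm c)]
          · rw [e.apply_symm_apply, if_pos hc, mul_one]
          · intro j _ hj
            rw [if_neg, mul_zero]
            intro hmem
            exact hj (by rw [← e.symm_apply_apply j, mem_patClass_unique hmem hc])
          · intro h
            exact absurd (Finset.mem_univ _) h
        rw [hsum]
        exact le_of_eq (const_on_patClass hG ha hinv (realizer_mem_patClass hv c) hc)
      · have hsum : ∑ j, g (v (e j)) * (if x ∈ patClass G a (e j) then (1:ℝ) else 0)
            = 0 := by
          refine Finset.sum_eq_zero fun j _ => ?_
          rw [if_neg (fun hmem => hx ⟨e j, hmem⟩), mul_zero]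
        rw [hsum]
        exact hg0 x
    · calc B = ∑ j, (fun c => g (v c) * wgt α c) (e j) :=
            (Equiv.sum_comp e (fun c => g (v c) * wgt α c)).symm
        _ = ∑ j, g (v (e j)) * ν (patClass G a (e j)) :=
            Finset.sum_congr rfl fun j _ => by rw [nu_patClass hν ha hv (e j)]
  have hbdd : BddAbove SS := ⟨B, fun r hr => hub r hr⟩
  have hne : SS.Nonempty := ⟨B, hmemB⟩
  show sSup SS = B
  exact le_antisymm (csSup_le hne hub) (le_csSup hbdd hmemB)

lemma nomIntegral_nonneg_le_one [Countable V] [Infinite V] (hG : HasExtensionProperty G)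
    {α : ℝ} (hα : α ∈ Set.Icc (0:ℝ) 1) {ν : Set V → ℝ}
    (hν : ∀ (S : Set V) {nn : ℕ} (aa : Fin nn → V) (vv : (Fin nn → Bool) → V),
      Function.Injective aa → SupportsSet G aa S → RealizesPatterns G aa vv →
        ν S = patVal α S vv)
    {g : V → ℝ} (hg0 : ∀ x, 0 ≤ g x) (hg1 : ∀ x, g x ≤ 1) :
    0 ≤ nomIntegral G ν g ∧ nomIntegral G ν g ≤ 1 := by
  set SS := {r : ℝ | ∃ (m : ℕ) (t : Fin m → ℝ) (U : Fin m → Set V),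
    (∀ i, 0 ≤ t i) ∧ (∀ i, FinitelySupportedSet G (U i)) ∧
    (∀ x, (∑ i, t i * (if x ∈ U i then (1:ℝ) else 0)) ≤ g x) ∧
    r = ∑ i, t i * ν (U i)} with hSS
  have h0 : (0:ℝ) ∈ SS := by
    refine ⟨0, Fin.elim0, Fin.elim0, fun i => i.elim0, fun i => i.elim0, ?_, by simp⟩
    intro x
    simpa using hg0 x
  have hub : ∀ r ∈ SS, r ≤ 1 := by
    rintro r ⟨m, t, U, ht, hU, hdom, rfl⟩
    obtain ⟨N, a', ι, v', ha', hιa, hι, hv', hle⟩ :=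
      key_bound hG hα hν Fin.elim0 (fun i => i.elim0) g t U ht hU hdom
    refine hle.trans ?_
    calc ∑ c' : Fin N → Bool, g (v' c') * wgt α c'
        ≤ ∑ c' : Fin N → Bool, wgt α c' :=
          Finset.sum_le_sum fun c' _ =>
            mul_le_of_le_one_left (wgt_nonneg hα c') (hg1 (v' c'))
      _ = 1 := wgt_sum α N
  have hbdd : BddAbove SS := ⟨1, fun r hr => hub r hr⟩
  constructor
  · exact le_csSup hbdd h0
  · exact csSup_le ⟨0, h0⟩ hub

lemma supports_image (τ : G ≃g G) {n : ℕ} {a : Fin n → V} {S : Set V}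
    (hsup : SupportsSet G a S) : SupportsSet G (fun i => τ (a i)) (τ '' S) := by
  intro ρ hρ
  set ρ' : G ≃g G := (τ.trans ρ).trans τ.symm with hρ'
  have hρ'fix : ∀ i, ρ' (a i) = a i := by
    intro i
    show τ.symm (ρ (τ (a i))) = a i
    rw [hρ i]
    exact τ.symm_apply_apply (a i)
  have him : ρ '' (τ '' S) = τ '' (ρ' '' S) := by
    rw [Set.image_image, Set.image_image]
    refine Set.image_congr fun x _ => ?_
    show ρ (τ x) = τ (τ.symm (ρ (τ x)))
    rw [τ.apply_symm_apply]
  rw [him, hsup ρ' hρ'fix]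

lemma finsupp_image (τ : G ≃g G) {S : Set V} (hS : FinitelySupportedSet G S) :
    FinitelySupportedSet G (τ '' S) := by
  obtain ⟨n, a, ha, hsup⟩ := hS
  exact ⟨n, fun i => τ (a i), fun i j h => ha (τ.injective h), supports_image τ hsup⟩

lemma realizes_image (τ : G ≃g G) {n : ℕ} {a : Fin n → V} {v : (Fin n → Bool) → V}
    (hv : RealizesPatterns G a v) :
    RealizesPatterns G (fun i => τ (a i)) (fun c => τ (v c)) := by
  intro c
  refine ⟨?_, ?_⟩
  · rintro ⟨i, hi⟩
    exact (hv c).1 ⟨i, τ.injective hi⟩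
  · intro i
    rw [τ.map_adj_iff]
    exact (hv c).2 i

lemma nu_image [Countable V] [Infinite V] (hG : HasExtensionProperty G)
    {α : ℝ} {ν : Set V → ℝ}
    (hν : ∀ (S : Set V) {nn : ℕ} (aa : Fin nn → V) (vv : (Fin nn → Bool) → V),
      Function.Injective aa → SupportsSet G aa S → RealizesPatterns G aa vv →
        ν S = patVal α S vv)
    (τ : G ≃g G) {S : Set V} (hS : FinitelySupportedSet G S) :
    ν (τ '' S) = ν S := by
  classical
  obtain ⟨n, a, ha, hsup⟩ := hS
  obtain ⟨v, hv⟩ := exists_realizes hG a ha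
  have haτ : Function.Injective (fun i => τ (a i)) := fun i j h => ha (τ.injective h)
  rw [hν S a v ha hsup hv,
    hν (τ '' S) (fun i => τ (a i)) (fun c => τ (v c)) haτ (supports_image τ hsup)
      (realizes_image τ hv)]
  unfold patVal
  refine Finset.sum_congr rfl fun c _ => ?_
  congr 1
  by_cases h : v c ∈ S
  · rw [if_pos h, if_pos (Set.mem_image_of_mem τ h)]
  · rw [if_neg h, if_neg (fun hmem => h ?_)]
    obtain ⟨z, hz, hze⟩ := hmem
    rwa [← τ.injective hze]

lemma nomIntegral_comp [Countable V] [Infinite V] (hG : HasExtensionProperty G)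
    {α : ℝ} {ν : Set V → ℝ}
    (hν : ∀ (S : Set V) {nn : ℕ} (aa : Fin nn → V) (vv : (Fin nn → Bool) → V),
      Function.Injective aa → SupportsSet G aa S → RealizesPatterns G aa vv →
        ν S = patVal α S vv)
    (τ : G ≃g G) (g : V → ℝ) :
    nomIntegral G ν (fun x => g (τ x)) = nomIntegral G ν g := by
  classical
  have key : ∀ (ρ : G ≃g G) (h : V → ℝ),
      {r : ℝ | ∃ (m : ℕ) (t : Fin m → ℝ) (U : Fin m → Set V),
        (∀ i, 0 ≤ t i) ∧ (∀ i, FinitelySupportedSet G (U i)) ∧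
        (∀ x, (∑ i, t i * (if x ∈ U i then (1:ℝ) else 0)) ≤ h (ρ x)) ∧
        r = ∑ i, t i * ν (U i)} ⊆
      {r : ℝ | ∃ (m : ℕ) (t : Fin m → ℝ) (U : Fin m → Set V),
        (∀ i, 0 ≤ t i) ∧ (∀ i, FinitelySupportedSet G (U i)) ∧
        (∀ x, (∑ i, t i * (if x ∈ U i then (1:ℝ) else 0)) ≤ h x) ∧
        r = ∑ i, t i * ν (U i)} := by
    rintro ρ h r ⟨m, t, U, ht, hU, hdom, rfl⟩
    refine ⟨m, t, fun i => ρ '' (U i), ht, fun i => finsupp_image ρ (hU i), ?_, ?_⟩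
    · intro x
      have hmem : ∀ i, (x ∈ ρ '' (U i)) ↔ ρ.symm x ∈ U i := by
        intro i
        constructor
        · rintro ⟨z, hz, rfl⟩
          rwa [ρ.symm_apply_apply]
        · intro hz
          exact ⟨ρ.symm x, hz, ρ.apply_symm_apply x⟩
      have := hdom (ρ.symm x)
      rw [ρ.apply_symm_apply] at this
      refine le_trans (le_of_eq ?_) this
      refine Finset.sum_congr rfl fun i _ => ?_
      congr 1
      by_cases hz : ρ.symm x ∈ U i
      · rw [if_pos ((hmem i).2 hz), if_pos hz]
      · rw [if_neg (fun hh => hz ((hmem i).1 hh)), if_neg hz]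
    · exact Finset.sum_congr rfl fun i _ => by rw [nu_image hG hν ρ (hU i)]
  have e1 := key τ g
  have e2 := key τ.symm (fun x => g (τ x))
  have he2 : ∀ x, g (τ (τ.symm x)) = g x := fun x => by rw [τ.apply_symm_apply]
  show sSup _ = sSup _
  have hseq : {r : ℝ | ∃ (m : ℕ) (t : Fin m → ℝ) (U : Fin m → Set V),
        (∀ i, 0 ≤ t i) ∧ (∀ i, FinitelySupportedSet G (U i)) ∧
        (∀ x, (∑ i, t i * (if x ∈ U i then (1:ℝ) else 0)) ≤ g (τ x)) ∧
        r = ∑ i, t i * ν (U i)} =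
      {r : ℝ | ∃ (m : ℕ) (t : Fin m → ℝ) (U : Fin m → Set V),
        (∀ i, 0 ≤ t i) ∧ (∀ i, FinitelySupportedSet G (U i)) ∧
        (∀ x, (∑ i, t i * (if x ∈ U i then (1:ℝ) else 0)) ≤ g x) ∧
        r = ∑ i, t i * ν (U i)} := by
    refine Set.Subset.antisymm e1 ?_
    rintro r ⟨m, t, U, ht, hU, hdom, rfl⟩
    refine e2 ⟨m, t, U, ht, hU, ?_, rfl⟩
    intro x
    rw [he2 x]
    exact hdom x
  rw [hseq]

lemma not_mem_range_snoc {n : ℕ} {a : Fin n → V} {x y : V}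
    (hy : y ∉ Set.range a) (hyx : y ≠ x) :
    y ∉ Set.range (Fin.snoc a x : Fin (n+1) → V) := by
  rintro ⟨i, hi⟩
  induction i using Fin.lastCases with
  | last => rw [Fin.snoc_last] at hi; exact hyx hi.symm
  | cast i => rw [Fin.snoc_castSucc] at hi; exact hy ⟨i, hi⟩

lemma wgt_snoc (α : ℝ) {n : ℕ} (c : Fin n → Bool) (b : Bool) :
    wgt α (Fin.snoc c b : Fin (n+1) → Bool) = wgt α c * (if b then α else 1 - α) := by
  unfold wgt
  rw [Fin.prod_univ_castSucc]
  congr 1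
  · exact Finset.prod_congr rfl fun i _ => by rw [Fin.snoc_castSucc]
  · rw [Fin.snoc_last]

lemma exists_double (hG : HasExtensionProperty G) {n : ℕ} {a : Fin n → V}
    (ha : Function.Injective a) (c c' : Fin n → Bool) (b : Bool) :
    ∃ x y : V, x ∉ Set.range a ∧ y ∉ Set.range a ∧ x ≠ y ∧
      (∀ i, G.Adj x (a i) ↔ c i = true) ∧ (∀ i, G.Adj y (a i) ↔ c' i = true) ∧
      (G.Adj x y ↔ b = true) := by
  obtain ⟨v, hv⟩ := exists_realizes hG a ha
  obtain ⟨u, hu⟩ := exists_realizes hG (Fin.snoc a (v c) : Fin (n+1) → V)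
    (snoc_inj ha (hv c).1)
  set d : Fin (n+1) → Bool := Fin.snoc c' b with hd
  have hyr : u d ∉ Set.range a := by
    rintro ⟨i, hi⟩
    exact (hu d).1 ⟨i.castSucc, by rwa [Fin.snoc_castSucc]⟩
  have hyx : u d ≠ v c := by
    intro h
    exact (hu d).1 ⟨Fin.last n, by rw [Fin.snoc_last]; exact h.symm⟩
  have hyA : ∀ i, G.Adj (u d) (a i) ↔ c' i = true := by
    intro i
    have := (hu d).2 i.castSucc
    rwa [Fin.snoc_castSucc, show d i.castSucc = c' i from Fin.snoc_castSucc _ _ _] at this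
  have hAdj : G.Adj (v c) (u d) ↔ b = true := by
    rw [G.adj_comm]
    have := (hu d).2 (Fin.last n)
    rwa [Fin.snoc_last, show d (Fin.last n) = b from Fin.snoc_last _ _] at this
  exact ⟨v c, u d, (hv c).1, hyr, fun h => hyx h.symm, (hv c).2, hyA, hAdj⟩

lemma iter_formula [Countable V] [Infinite V] (hG : HasExtensionProperty G)
    {α : ℝ} (hα : α ∈ Set.Icc (0:ℝ) 1) {ν : Set V → ℝ}
    (hν : ∀ (S : Set V) {nn : ℕ} (aa : Fin nn → V) (vv : (Fin nn → Bool) → V),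
      Function.Injective aa → SupportsSet G aa S → RealizesPatterns G aa vv →
        ν S = patVal α S vv)
    {n : ℕ} {a : Fin n → V} (ha : Function.Injective a)
    (f : V → V → ℝ)
    (hinv : ∀ σ : G ≃g G, (∀ i, σ (a i) = a i) → ∀ x y, f (σ x) (σ y) = f x y)
    (hbd : ∀ x y, f x y ∈ Set.Icc (0:ℝ) 1) :
    ∃ Φ : (Fin n → Bool) → (Fin n → Bool) → Bool → ℝ,
      (∀ (x y : V) (c c' : Fin n → Bool) (b : Bool),
        x ∉ Set.range a → y ∉ Set.range a → x ≠ y →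
        (∀ i, G.Adj x (a i) ↔ c i = true) → (∀ i, G.Adj y (a i) ↔ c' i = true) →
        (G.Adj x y ↔ b = true) → f x y = Φ c c' b) ∧
      nomIntegral G ν (fun x => nomIntegral G ν (fun y => f x y)) =
        ∑ c : Fin n → Bool, ∑ c' : Fin n → Bool, ∑ b : Bool,
          Φ c c' b * (wgt α c * (wgt α c' * (if b then α else 1 - α))) := by
  classical
  -- two-point well-definedness
  have wd : ∀ (x y x' y' : V) (c c' : Fin n → Bool) (b : Bool),
      x ∉ Set.range a → y ∉ Set.range a → x ≠ y →
      (∀ i, G.Adj x (a i) ↔ c i = true) → (∀ i, G.Adj y (a i) ↔ c' i = true) →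
      (G.Adj x y ↔ b = true) →
      x' ∉ Set.range a → y' ∉ Set.range a → x' ≠ y' →
      (∀ i, G.Adj x' (a i) ↔ c i = true) → (∀ i, G.Adj y' (a i) ↔ c' i = true) →
      (G.Adj x' y' ↔ b = true) → f x y = f x' y' := by
    intro x y x' y' c c' b hx hy hxy hxc hyc hb hx' hy' hxy' hxc' hyc' hb'
    set a2 : Fin (n+2) → V := Fin.snoc (Fin.snoc a x) y with ha2
    set b2 : Fin (n+2) → V := Fin.snoc (Fin.snoc a x') y' with hb2
    have ha2i : Function.Injective a2 :=
      snoc_inj (snoc_inj ha hx) (not_mem_range_snoc hy (fun h => hxy h.symm))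
    have hb2i : Function.Injective b2 :=
      snoc_inj (snoc_inj ha hx') (not_mem_range_snoc hy' (fun h => hxy' h.symm))
    have hadj2 : ∀ i j, G.Adj (a2 i) (a2 j) ↔ G.Adj (b2 i) (b2 j) := by
      have e1 : ∀ k : Fin n, a2 k.castSucc.castSucc = a k := by
        intro k; simp only [ha2, Fin.snoc_castSucc]
      have e2 : a2 (Fin.last (n+1)) = y := by simp only [ha2, Fin.snoc_last]
      have e3 : a2 (Fin.last n).castSucc = x := by
        simp only [ha2, Fin.snoc_castSucc, Fin.snoc_last]
      have f1 : ∀ k : Fin n, b2 k.castSucc.castSucc = a k := by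
        intro k; simp only [hb2, Fin.snoc_castSucc]
      have f2 : b2 (Fin.last (n+1)) = y' := by simp only [hb2, Fin.snoc_last]
      have f3 : b2 (Fin.last n).castSucc = x' := by
        simp only [hb2, Fin.snoc_castSucc, Fin.snoc_last]
      intro i j
      induction i using Fin.lastCases with
      | last =>
        induction j using Fin.lastCases with
        | last => rw [e2, f2]; exact iff_of_false (G.irrefl) (G.irrefl)
        | cast j =>
          induction j using Fin.lastCases with
          | last =>
            rw [e2, f2, e3, f3, G.adj_comm y x, G.adj_comm y' x']
            exact hb.trans hb'.symm
          | cast j =>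
            rw [e2, f2, e1 j, f1 j]
            exact (hyc j).trans (hyc' j).symm
      | cast i =>
        induction i using Fin.lastCases with
        | last =>
          induction j using Fin.lastCases with
          | last =>
            rw [e2, f2, e3, f3]
            exact hb.trans hb'.symm
          | cast j =>
            induction j using Fin.lastCases with
            | last =>
              rw [e3, f3]
              exact iff_of_false (G.irrefl) (G.irrefl)
            | cast j =>
              rw [e3, f3, e1 j, f1 j]
              exact (hxc j).trans (hxc' j).symm
        | cast i =>
          induction j using Fin.lastCases with
          | last =>
            rw [e2, f2, e1 i, f1 i, G.adj_comm _ y, G.adj_comm _ y']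
            exact (hyc i).trans (hyc' i).symm
          | cast j =>
            induction j using Fin.lastCases with
            | last =>
              rw [e3, f3, e1 i, f1 i, G.adj_comm (a i) x, G.adj_comm (a i) x']
              exact (hxc i).trans (hxc' i).symm
            | cast j =>
              rw [e1 i, f1 i, e1 j, f1 j]
    obtain ⟨σ, hσ⟩ := exists_auto hG a2 b2 ha2i hb2i hadj2
    have hfixa : ∀ i, σ (a i) = a i := by
      intro i
      have := hσ i.castSucc.castSucc
      rwa [show a2 i.castSucc.castSucc = a i by simp only [ha2, Fin.snoc_castSucc],
        show b2 i.castSucc.castSucc = a i by simp only [hb2, Fin.snoc_castSucc]] at this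
    have hσx : σ x = x' := by
      have := hσ (Fin.last n).castSucc
      rwa [show a2 (Fin.last n).castSucc = x by
          simp only [ha2, Fin.snoc_castSucc, Fin.snoc_last],
        show b2 (Fin.last n).castSucc = x' by
          simp only [hb2, Fin.snoc_castSucc, Fin.snoc_last]] at this
    have hσy : σ y = y' := by
      have := hσ (Fin.last (n+1))
      rwa [show a2 (Fin.last (n+1)) = y by simp only [ha2, Fin.snoc_last],
        show b2 (Fin.last (n+1)) = y' by simp only [hb2, Fin.snoc_last]] at this
    rw [← hσx, ← hσy]
    exact (hinv σ hfixa x y).symm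
  -- realizers
  obtain ⟨v, hv⟩ := exists_realizes hG a ha
  have hsnoc : ∀ c : Fin n → Bool,
      Function.Injective (Fin.snoc a (v c) : Fin (n+1) → V) :=
    fun c => snoc_inj ha (hv c).1
  have huex : ∀ c : Fin n → Bool,
      ∃ u, RealizesPatterns G (Fin.snoc a (v c) : Fin (n+1) → V) u :=
    fun c => exists_realizes hG _ (hsnoc c)
  set u : (Fin n → Bool) → (Fin (n+1) → Bool) → V := fun c => (huex c).choose with hudef
  have hu : ∀ c, RealizesPatterns G (Fin.snoc a (v c) : Fin (n+1) → V) (u c) :=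
    fun c => (huex c).choose_spec
  -- witness properties
  have w1 : ∀ c d, u c d ∉ Set.range a := by
    rintro c d ⟨i, hi⟩
    exact ((hu c) d).1 ⟨i.castSucc, by rwa [Fin.snoc_castSucc]⟩
  have w2 : ∀ c d, u c d ≠ v c := by
    intro c d h
    exact ((hu c) d).1 ⟨Fin.last n, by rw [Fin.snoc_last]; exact h.symm⟩
  have w3 : ∀ c d i, G.Adj (u c d) (a i) ↔ d i.castSucc = true := by
    intro c d i
    have := ((hu c) d).2 i.castSucc
    rwa [Fin.snoc_castSucc] at this
  have w4 : ∀ c d, G.Adj (v c) (u c d) ↔ d (Fin.last n) = true := by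
    intro c d
    rw [G.adj_comm]
    have := ((hu c) d).2 (Fin.last n)
    rwa [Fin.snoc_last] at this
  set Φ : (Fin n → Bool) → (Fin n → Bool) → Bool → ℝ :=
    fun c c' b => f (v c) (u c (Fin.snoc c' b)) with hΦ
  have spec : ∀ (x y : V) (c c' : Fin n → Bool) (b : Bool),
      x ∉ Set.range a → y ∉ Set.range a → x ≠ y →
      (∀ i, G.Adj x (a i) ↔ c i = true) → (∀ i, G.Adj y (a i) ↔ c' i = true) →
      (G.Adj x y ↔ b = true) → f x y = Φ c c' b := by
    intro x y c c' b hx hy hxy hxc hyc hb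
    refine wd x y (v c) (u c (Fin.snoc c' b)) c c' b hx hy hxy hxc hyc hb
      (hv c).1 (w1 c _) (fun h => w2 c _ h.symm) (hv c).2 ?_ ?_
    · intro i
      rw [w3 c _ i, Fin.snoc_castSucc]
    · rw [w4 c _, Fin.snoc_last]
  refine ⟨Φ, spec, ?_⟩
  -- the inner integral function
  set F : V → ℝ := fun x => nomIntegral G ν (fun y => f x y) with hF
  have hF0 : ∀ x, 0 ≤ F x := fun x =>
    (nomIntegral_nonneg_le_one hG hα hν (fun y => (hbd x y).1) (fun y => (hbd x y).2)).1
  have hF1 : ∀ x, F x ≤ 1 := fun x =>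
    (nomIntegral_nonneg_le_one hG hα hν (fun y => (hbd x y).1) (fun y => (hbd x y).2)).2
  have hFinv : ∀ σ : G ≃g G, (∀ i, σ (a i) = a i) → ∀ x, F (σ x) = F x := by
    intro σ hσ x
    have hfun : (fun y => f (σ x) y) = (fun y => f x (σ.symm y)) := by
      funext y
      conv_lhs => rw [show y = σ (σ.symm y) from (σ.apply_symm_apply y).symm]
      exact hinv σ hσ x (σ.symm y)
    show nomIntegral G ν (fun y => f (σ x) y) = nomIntegral G ν (fun y => f x y)
    rw [hfun]
    exact nomIntegral_comp hG hν σ.symm (fun z => f x z)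
  have hFval : ∀ c : Fin n → Bool,
      F (v c) = ∑ d : Fin (n+1) → Bool, f (v c) (u c d) * wgt α d := by
    intro c
    refine nomIntegral_eq hG hα hν (hsnoc c) (hu c)
      (fun y => (hbd _ y).1) (fun y => (hbd _ y).2) ?_
    intro σ hσ z
    have hfixa : ∀ i, σ (a i) = a i := by
      intro i
      have := hσ i.castSucc
      rwa [Fin.snoc_castSucc] at this
    have hfixv : σ (v c) = v c := by
      have := hσ (Fin.last n)
      rwa [Fin.snoc_last] at this
    conv_lhs => rw [show v c = σ (v c) from hfixv.symm]
    exact hinv σ hfixa (v c) z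
  have houter : nomIntegral G ν F = ∑ c : Fin n → Bool, F (v c) * wgt α c :=
    nomIntegral_eq hG hα hν ha hv hF0 hF1 hFinv
  -- reindex the inner sums
  set E : (Fin n → Bool) × Bool ≃ (Fin (n+1) → Bool) :=
    { toFun := fun p => Fin.snoc p.1 p.2
      invFun := fun d => (fun i => d i.castSucc, d (Fin.last n))
      left_inv := by
        rintro ⟨c', b⟩
        refine Prod.ext ?_ ?_
        · funext i
          show (Fin.snoc c' b : Fin (n+1) → Bool) i.castSucc = c' i
          exact Fin.snoc_castSucc _ _ _
        · show (Fin.snoc c' b : Fin (n+1) → Bool) (Fin.last n) = b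
          exact Fin.snoc_last _ _
      right_inv := by
        intro d
        show (Fin.snoc (fun i => d i.castSucc) (d (Fin.last n)) : Fin (n+1) → Bool) = d
        funext i
        induction i using Fin.lastCases with
        | last => exact Fin.snoc_last _ _
        | cast i => exact Fin.snoc_castSucc _ _ _ } with hE
  have hinner : ∀ c : Fin n → Bool,
      F (v c) = ∑ c' : Fin n → Bool, ∑ b : Bool,
        Φ c c' b * (wgt α c' * (if b then α else 1 - α)) := by
    intro c
    rw [hFval c]
    rw [← Equiv.sum_comp E (fun d => f (v c) (u c d) * wgt α d)]
    rw [Fintype.sum_prod_type]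
    refine Finset.sum_congr rfl fun c' _ => Finset.sum_congr rfl fun b _ => ?_
    show f (v c) (u c (Fin.snoc c' b)) * wgt α (Fin.snoc c' b) = _
    rw [wgt_snoc]
  rw [show nomIntegral G ν (fun x => nomIntegral G ν (fun y => f x y))
      = nomIntegral G ν F from rfl, houter]
  refine Finset.sum_congr rfl fun c _ => ?_
  rw [hinner c, Finset.sum_mul]
  refine Finset.sum_congr rfl fun c' _ => ?_
  rw [Finset.sum_mul]
  refine Finset.sum_congr rfl fun b _ => ?_
  ring

end KeyBound

end Measure

open scoped Classical in
/-- Fubini for `ν_α`: the measure `ν_α` on the Rado graph commutes with itself on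
finitely-supported `[0,1]`-valued functions; in particular both iterated integrals
of the indicator of the edge relation equal `α`. -/
theorem stmt14 {V : Type} [Countable V] [Infinite V]
    (G : SimpleGraph V) (hG : HasExtensionProperty G)
    (α : ℝ) (hα : α ∈ Set.Icc (0:ℝ) 1)
    (ν : Set V → ℝ)
    (hν : ∀ (S : Set V) {n : ℕ} (a : Fin n → V) (v : (Fin n → Bool) → V),
      Function.Injective a → SupportsSet G a S → RealizesPatterns G a v →
        ν S = patVal α S v)
    (f : V → V → ℝ) (hf : FinSuppFun₂ G f)
    (hbd : ∀ x y, f x y ∈ Set.Icc (0:ℝ) 1) :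
    nomIntegral G ν (fun x => nomIntegral G ν (fun y => f x y)) =
      nomIntegral G ν (fun y => nomIntegral G ν (fun x => f x y)) ∧
    nomIntegral G ν
        (fun x => nomIntegral G ν (fun y => if G.Adj x y then (1:ℝ) else 0)) = α ∧
    nomIntegral G ν
        (fun y => nomIntegral G ν (fun x => if G.Adj x y then (1:ℝ) else 0)) = α := by
  classical
  obtain ⟨n₀, a₀, hf₀⟩ := hf
  set A : Finset V := Finset.univ.image a₀ with hA
  set a : Fin A.card → V := fun k => ((A.equivFin.symm k : A) : V) with ha
  have hainj : Function.Injective a := fun k l h =>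
    A.equivFin.symm.injective (Subtype.ext h)
  have hmem : ∀ x ∈ A, ∃ k, a k = x := fun x hx => ⟨A.equivFin ⟨x, hx⟩, by simp [ha]⟩
  have hinv : ∀ σ : G ≃g G, (∀ k, σ (a k) = a k) → ∀ x y, f (σ x) (σ y) = f x y := by
    intro σ hσ
    refine hf₀ σ fun i => ?_
    obtain ⟨k, hk⟩ := hmem (a₀ i) (Finset.mem_image_of_mem a₀ (Finset.mem_univ i))
    rw [← hk]
    exact hσ k
  have hainj0 : Function.Injective (Fin.elim0 : Fin 0 → V) := fun i => i.elim0
  refine ⟨?_, ?_, ?_⟩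
  · -- Fubini
    obtain ⟨Φ, hΦs, hΦv⟩ := iter_formula hG hα hν hainj f hinv hbd
    obtain ⟨Ψ, hΨs, hΨv⟩ := iter_formula hG hα hν hainj (fun x y => f y x)
      (fun σ hσ x y => hinv σ hσ y x) (fun x y => hbd y x)
    have hΨΦ : ∀ c c' b, Ψ c c' b = Φ c' c b := by
      intro c c' b
      obtain ⟨x, y, hx, hy, hxy, hxc, hyc, hb⟩ := exists_double hG hainj c c' b
      have h1 := hΨs x y c c' b hx hy hxy hxc hyc hb
      have h2 := hΦs y x c' c b hy hx (fun h => hxy h.symm) hyc hxc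
        (by rwa [G.adj_comm])
      rw [← h1, ← h2]
    calc nomIntegral G ν (fun x => nomIntegral G ν (fun y => f x y))
        = ∑ c : Fin A.card → Bool, ∑ c' : Fin A.card → Bool, ∑ b : Bool,
            Φ c c' b * (wgt α c * (wgt α c' * (if b then α else 1 - α))) := hΦv
      _ = ∑ c : Fin A.card → Bool, ∑ c' : Fin A.card → Bool, ∑ b : Bool,
            Ψ c' c b * (wgt α c' * (wgt α c * (if b then α else 1 - α))) := by
          refine Finset.sum_congr rfl fun c _ => Finset.sum_congr rfl fun c' _ =>
            Finset.sum_congr rfl fun b _ => ?_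
          rw [hΨΦ c' c b]
          ring
      _ = ∑ c' : Fin A.card → Bool, ∑ c : Fin A.card → Bool, ∑ b : Bool,
            Ψ c' c b * (wgt α c' * (wgt α c * (if b then α else 1 - α))) :=
          Finset.sum_comm
      _ = nomIntegral G ν (fun y => nomIntegral G ν (fun x => f x y)) := hΨv.symm
  · -- edge indicator, first order
    obtain ⟨Φ, hΦs, hΦv⟩ := iter_formula (ν := ν) hG hα hν hainj0
      (fun x y => if G.Adj x y then (1:ℝ) else 0)
      (fun σ hσ x y => by by_cases h : G.Adj x y <;> simp [h, σ.map_adj_iff])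
      (fun x y => by by_cases h : G.Adj x y <;> simp [h])
    have hΦb : ∀ (c c' : Fin 0 → Bool) (b : Bool), Φ c c' b = if b then 1 else 0 := by
      intro c c' b
      obtain ⟨x, y, hx, hy, hxy, hxc, hyc, hb⟩ := exists_double hG hainj0 c c' b
      have h1 := hΦs x y c c' b hx hy hxy hxc hyc hb
      rw [← h1]
      cases b
      · rw [if_neg (by simp [hb]), if_neg (by simp)]
      · rw [if_pos (hb.2 rfl), if_pos rfl]
    calc nomIntegral G ν
          (fun x => nomIntegral G ν (fun y => if G.Adj x y then (1:ℝ) else 0))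
        = ∑ c : Fin 0 → Bool, ∑ c' : Fin 0 → Bool, ∑ b : Bool,
            Φ c c' b * (wgt α c * (wgt α c' * (if b then α else 1 - α))) := hΦv
      _ = α := by
          simp only [hΦb]
          rw [Fintype.sum_unique, Fintype.sum_unique, Fintype.sum_bool]
          simp only [wgt, Finset.univ_eq_empty, Finset.prod_empty]
          norm_num
  · -- edge indicator, second order
    obtain ⟨Φ, hΦs, hΦv⟩ := iter_formula (ν := ν) hG hα hν hainj0
      (fun x y => if G.Adj y x then (1:ℝ) else 0)
      (fun σ hσ x y => by by_cases h : G.Adj y x <;> simp [h, σ.map_adj_iff])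
      (fun x y => by by_cases h : G.Adj y x <;> simp [h])
    have hΦb : ∀ (c c' : Fin 0 → Bool) (b : Bool), Φ c c' b = if b then 1 else 0 := by
      intro c c' b
      obtain ⟨x, y, hx, hy, hxy, hxc, hyc, hb⟩ := exists_double hG hainj0 c c' b
      have h1 := hΦs x y c c' b hx hy hxy hxc hyc hb
      rw [← h1]
      have hb' : G.Adj y x ↔ b = true := by rw [G.adj_comm]; exact hb
      cases b
      · rw [if_neg (by simp [hb']), if_neg (by simp)]
      · rw [if_pos (hb'.2 rfl), if_pos rfl]
    calc nomIntegral G ν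
          (fun y => nomIntegral G ν (fun x => if G.Adj x y then (1:ℝ) else 0))
        = ∑ c : Fin 0 → Bool, ∑ c' : Fin 0 → Bool, ∑ b : Bool,
            Φ c c' b * (wgt α c * (wgt α c' * (if b then α else 1 - α))) := hΦv
      _ = α := by
          simp only [hΦb]
          rw [Fintype.sum_unique, Fintype.sum_unique, Fintype.sum_bool]
          simp only [wgt, Finset.univ_eq_empty, Finset.prod_empty]
          norm_num
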